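/- arXiv:math/0209399 — 5 statements merged into one kernel-verified Lean document; each statement's English description precedes it below -/
import Mathlib

section
/- For positive definite matrices B and P, the equation A*B*A = P has a unique positive definite solution A, namely A = B^{-1/2} (B^{1/2} P B^{1/2})^{1/2} B^{-1/2}. -/
open scoped ComplexOrder Matrix

/-- The positive semidefinite square root of a positive semidefinite matrix (as in the older
Mathlib, where it was `Matrix.PosSemidef.sqrt`). -/
noncomputable def Matrix.PosSemidef.sqrt {n : Type*} [Fintype n] [DecidableEq n]
    {𝕜 : Type*} [RCLike 𝕜] {A : Matrix n n 𝕜} (hA : A.PosSemidef) : Matrix n n 𝕜 :=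
  hA.isHermitian.eigenvectorUnitary.1 * Matrix.diagonal ((↑) ∘ (√·) ∘ hA.isHermitian.eigenvalues) *
  (star hA.isHermitian.eigenvectorUnitary : Matrix n n 𝕜)

lemma Matrix.PosSemidef.posSemidef_sqrt {n : Type*} [Fintype n] [DecidableEq n]
    {𝕜 : Type*} [RCLike 𝕜] {A : Matrix n n 𝕜} (hA : A.PosSemidef) : hA.sqrt.PosSemidef := by
  have hd : (Matrix.diagonal ((↑) ∘ (√·) ∘ hA.isHermitian.eigenvalues : n → 𝕜)).PosSemidef := by
    rw [Matrix.posSemidef_diagonal_iff]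
    intro i
    simp only [Function.comp_apply, RCLike.ofReal_nonneg]
    exact Real.sqrt_nonneg _
  have := hd.mul_mul_conjTranspose_same (hA.isHermitian.eigenvectorUnitary : Matrix n n 𝕜)
  unfold Matrix.PosSemidef.sqrt
  convert this using 1
  rfl

open scoped MatrixOrder in
lemma Matrix.PosSemidef.sqrt_eq_cfc_aux {n : Type*} [Fintype n] [DecidableEq n]
    {A : Matrix n n ℂ} (hA : A.PosSemidef) : hA.sqrt = CFC.sqrt A := by
  rw [CFC.sqrt_eq_real_sqrt A hA.nonneg, cfcₙ_eq_cfc, hA.isHermitian.cfc_eq]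
  rfl

open scoped MatrixOrder in
lemma Matrix.PosSemidef.sqrt_mul_self {n : Type*} [Fintype n] [DecidableEq n]
    {A : Matrix n n ℂ} (hA : A.PosSemidef) : hA.sqrt * hA.sqrt = A := by
  rw [hA.sqrt_eq_cfc_aux]
  exact CFC.sqrt_mul_sqrt_self A hA.nonneg

open scoped MatrixOrder in
lemma Matrix.PosSemidef.eq_sqrt_of_sq_eq {n : Type*} [Fintype n] [DecidableEq n]
    {A B : Matrix n n ℂ} (hB : B.PosSemidef) (hA : A.PosSemidef) (h : B ^ 2 = A) :
    B = hA.sqrt := by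
  rw [hA.sqrt_eq_cfc_aux]
  exact (CFC.sqrt_unique (by rw [← sq]; exact h) hB.nonneg).symm

/-- `B^{1/2} P B^{1/2}` is positive semidefinite, so that its square root is defined. -/
lemma middle_posSemidef {n : ℕ} {B P : Matrix (Fin n) (Fin n) ℂ}
    (hB : B.PosDef) (hP : P.PosDef) :
    (hB.posSemidef.sqrt * P * hB.posSemidef.sqrt).PosSemidef := by
  have h := hP.posSemidef.mul_mul_conjTranspose_same hB.posSemidef.sqrt
  rwa [hB.posSemidef.posSemidef_sqrt.1] at h

/-- Conjugation by an invertible matrix preserves positive definiteness. -/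
lemma posDef_conj_aux {n : ℕ} {M C : Matrix (Fin n) (Fin n) ℂ}
    (hM : M.PosDef) (hC : IsUnit C) : (Cᴴ * M * C).PosDef := by
  refine Matrix.PosDef.of_dotProduct_mulVec_pos (Matrix.isHermitian_conjTranspose_mul_mul C hM.1) fun x hx => ?_
  have hCx : C *ᵥ x ≠ 0 := by
    intro h0
    exact hx <| Matrix.mulVec_injective_iff_isUnit.mpr hC (by rw [Matrix.mulVec_zero]; exact h0)
  simpa only [Matrix.star_mulVec, Matrix.dotProduct_mulVec, Matrix.vecMul_vecMul]
    using hM.dotProduct_mulVec_pos hCx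

/-- A positive semidefinite invertible matrix is positive definite. -/
lemma posDef_of_posSemidef_isUnit {n : ℕ} {M : Matrix (Fin n) (Fin n) ℂ}
    (hM : M.PosSemidef) (hU : IsUnit M) : M.PosDef := by
  have hT := hM.posSemidef_sqrt
  have hTT : hM.sqrt * hM.sqrt = M := hM.sqrt_mul_self
  have hTu : IsUnit hM.sqrt := by
    rw [Matrix.isUnit_iff_isUnit_det] at hU ⊢
    rw [← hTT, Matrix.det_mul] at hU
    exact isUnit_of_mul_isUnit_left hU
  have : (hM.sqrtᴴ * 1 * hM.sqrt).PosDef := posDef_conj_aux Matrix.PosDef.one hTu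
  rwa [Matrix.mul_one, hT.1, hTT] at this

/-- The equation `A*B*A = P` has the unique positive definite solution
`A = B^{-1/2} (B^{1/2} P B^{1/2})^{1/2} B^{-1/2}`. -/
theorem stmt_4 {n : ℕ} (B P : Matrix (Fin n) (Fin n) ℂ)
    (hB : B.PosDef) (hP : P.PosDef) :
    ∀ A : Matrix (Fin n) (Fin n) ℂ,
      (A.PosDef ∧ A * B * A = P) ↔
        A = (hB.posSemidef.sqrt)⁻¹ * (middle_posSemidef hB hP).sqrt *
              (hB.posSemidef.sqrt)⁻¹ := by
  intro A
  set S := hB.posSemidef.sqrt with hSdef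
  have hS : S.PosSemidef := hB.posSemidef.posSemidef_sqrt
  have hSS : S * S = B := hB.posSemidef.sqrt_mul_self
  have hSu : IsUnit S := by
    rw [Matrix.isUnit_iff_isUnit_det]
    have hBu := hB.isUnit
    rw [Matrix.isUnit_iff_isUnit_det, ← hSS, Matrix.det_mul] at hBu
    exact isUnit_of_mul_isUnit_left hBu
  have hSdet : IsUnit S.det := (Matrix.isUnit_iff_isUnit_det S).mp hSu
  have : Invertible S := S.invertibleOfIsUnitDet hSdet
  have hSinvH : (S⁻¹)ᴴ = S⁻¹ := by rw [Matrix.conjTranspose_nonsing_inv, hS.1]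
  set M := S * P * S with hMdef
  have hMpsd := middle_posSemidef hB hP
  set R := hMpsd.sqrt with hRdef
  have hRR : R * R = M := hMpsd.sqrt_mul_self
  have hMpd : M.PosDef := by
    have := posDef_conj_aux hP hSu
    rwa [hS.1] at this
  have hRpd : R.PosDef := by
    refine posDef_of_posSemidef_isUnit hMpsd.posSemidef_sqrt ?_
    rw [Matrix.isUnit_iff_isUnit_det]
    have hMu := hMpd.isUnit
    rw [Matrix.isUnit_iff_isUnit_det, ← hRR, Matrix.det_mul] at hMu
    exact isUnit_of_mul_isUnit_left hMu
  constructor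
  · rintro ⟨hA, hABA⟩
    have hCpsd : (S * A * S).PosSemidef := by
      have := hA.posSemidef.conjTranspose_mul_mul_same S
      rwa [hS.1] at this
    have hsq : (S * A * S) ^ 2 = M := by
      have h1 : (S * A * S) * (S * A * S) = S * (A * (S * S) * A) * S := by
        simp only [Matrix.mul_assoc]
      rw [sq, h1, hSS, hABA]
    have hC : S * A * S = R := hCpsd.eq_sqrt_of_sq_eq hMpsd hsq
    have key : S⁻¹ * (S * A * S) * S⁻¹ = A := by
      rw [Matrix.mul_assoc S A S, Matrix.inv_mul_cancel_left_of_invertible,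
        Matrix.mul_inv_cancel_right_of_invertible]
    rw [← key, hC]
  · rintro rfl
    refine ⟨?_, ?_⟩
    · have hSiu : IsUnit S⁻¹ := Matrix.isUnit_nonsing_inv_iff.mpr hSu
      have := posDef_conj_aux hRpd hSiu
      rwa [hSinvH] at this
    · have key : S⁻¹ * R * S⁻¹ * (S * S) * (S⁻¹ * R * S⁻¹) = P := by
        have h2 : S⁻¹ * R * S⁻¹ * (S * S) * (S⁻¹ * R * S⁻¹)
            = S⁻¹ * (R * ((S⁻¹ * (S * (S * (S⁻¹ * R)))) * S⁻¹)) := by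
          simp only [Matrix.mul_assoc]
        rw [h2, Matrix.inv_mul_cancel_left_of_invertible,
          Matrix.mul_inv_cancel_left_of_invertible]
        have h3 : S⁻¹ * (R * (R * S⁻¹)) = S⁻¹ * (R * R) * S⁻¹ := by
          simp only [Matrix.mul_assoc]
        rw [h3, hRR, hMdef, Matrix.mul_assoc S P S,
          Matrix.inv_mul_cancel_left_of_invertible,
          Matrix.mul_inv_cancel_right_of_invertible]
      rw [hSS] at key
      exact key
end

section
/- If B is positive definite, A is positive definite, and A^{-1} B A^2 B A^{-1} = I, then B = I. Consequently, for any positive definite B ≠ I, the equation A^{-1} B A^2 B A^{-1} = I has no positive definite solution A. -/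
open scoped ComplexOrder Matrix

theorem stmt_7 {n : ℕ} (B : Matrix (Fin n) (Fin n) ℂ) (hB : B.PosDef) :
    (∀ A : Matrix (Fin n) (Fin n) ℂ, A.PosDef →
        A⁻¹ * B * A ^ 2 * B * A⁻¹ = 1 → B = 1) ∧
      (B ≠ 1 → ¬ ∃ A : Matrix (Fin n) (Fin n) ℂ, A.PosDef ∧
        A⁻¹ * B * A ^ 2 * B * A⁻¹ = 1) := by
  have main : ∀ A : Matrix (Fin n) (Fin n) ℂ, A.PosDef →
      A⁻¹ * B * A ^ 2 * B * A⁻¹ = 1 → B = 1 := by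
    intro A hA h
    have hAd : IsUnit A.det := (Matrix.isUnit_iff_isUnit_det A).mp hA.isUnit
    have hinv : A * A⁻¹ = 1 := Matrix.mul_nonsing_inv A hAd
    have hinv' : A⁻¹ * A = 1 := Matrix.nonsing_inv_mul A hAd
    have key : B * A ^ 2 * B = A ^ 2 := by
      have := congrArg (fun M => A * M * A) h
      simp only [Matrix.mul_one, Matrix.one_mul] at this
      calc B * A ^ 2 * B = (A * A⁻¹) * B * A ^ 2 * B * (A⁻¹ * A) := by
            rw [hinv, hinv']; simp
        _ = (A * (A⁻¹ * B * A ^ 2 * B * A⁻¹)) * A := by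
            simp only [Matrix.mul_assoc]
        _ = A * A := by rw [h]; simp
        _ = A ^ 2 := (sq A).symm
    have heq : (A * B * A) ^ 2 = (A ^ 2) ^ 2 := by
      calc (A * B * A) ^ 2 = A * (B * A ^ 2 * B) * A := by
            simp only [sq, Matrix.mul_assoc]
        _ = A * A ^ 2 * A := by rw [key]
        _ = (A ^ 2) ^ 2 := by simp only [sq, Matrix.mul_assoc]
    have hABA : (A * B * A).PosSemidef := by
      have := hB.posSemidef.mul_mul_conjTranspose_same A
      rwa [hA.isHermitian.eq] at this
    have hA2 : (A ^ 2).PosSemidef := hA.posSemidef.pow 2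
    have eq1 : A * B * A = A ^ 2 := by
      open scoped MatrixOrder Matrix.Norms.L2Operator in
      exact (CFC.sq_eq_sq_iff _ _ hABA.nonneg hA2.nonneg).mp heq
    have := congrArg (fun M => A⁻¹ * M * A⁻¹) eq1
    calc B = (A⁻¹ * A) * B * (A * A⁻¹) := by rw [hinv, hinv']; simp
      _ = A⁻¹ * (A * B * A) * A⁻¹ := by simp only [Matrix.mul_assoc]
      _ = A⁻¹ * A ^ 2 * A⁻¹ := by rw [eq1]
      _ = (A⁻¹ * A) * (A * A⁻¹) := by simp only [sq, Matrix.mul_assoc]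
      _ = 1 := by rw [hinv, hinv', Matrix.mul_one]
  exact ⟨main, fun hne ⟨A, hA, h⟩ => hne (main A hA h)⟩
end

section
/- If A is positive definite and A B A^{-1} is unitary for some positive definite B, then B = I. -/
open scoped ComplexOrder Matrix

theorem stmt_8 {n : ℕ} (A B : Matrix (Fin n) (Fin n) ℂ)
    (hA : A.PosDef) (hB : B.PosDef)
    (hU : (A * B * A⁻¹)ᴴ * (A * B * A⁻¹) = 1) : B = 1 := by
  have hAu : IsUnit A := (Matrix.isUnit_iff_isUnit_det A).mpr
    (isUnit_iff_ne_zero.mpr (ne_of_gt hA.det_pos))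
  have hAinv : A * A⁻¹ = 1 := Matrix.mul_nonsing_inv A (isUnit_iff_ne_zero.mpr (ne_of_gt hA.det_pos))
  have hAinv' : A⁻¹ * A = 1 := Matrix.nonsing_inv_mul A (isUnit_iff_ne_zero.mpr (ne_of_gt hA.det_pos))
  -- rewrite hU
  have hAH : Aᴴ = A := hA.isHermitian
  have hBH : Bᴴ = B := hB.isHermitian
  have h1 : (A * B * A⁻¹)ᴴ = A⁻¹ * B * A := by
    simp [Matrix.conjTranspose_mul, Matrix.conjTranspose_nonsing_inv, hAH, hBH, Matrix.mul_assoc]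
  rw [h1] at hU
  -- derive B * (A*A) * B = A*A
  have key : B * (A * A) * B = A * A := by
    have := congrArg (fun M => A * M * A) hU
    simp only [Matrix.mul_assoc] at this ⊢
    rw [← Matrix.mul_assoc A A⁻¹, hAinv, Matrix.one_mul, hAinv'] at this
    rw [Matrix.one_mul, Matrix.mul_one] at this
    exact this
  -- (A*B*A)^2 = (A*A)^2
  have hsq : (A * B * A) ^ 2 = (A * A) ^ 2 := by
    have : (A * B * A) * (A * B * A) = (A * A) * (A * A) := by
      calc (A * B * A) * (A * B * A) = A * (B * (A * A) * B) * A := by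
            simp only [Matrix.mul_assoc]
        _ = A * (A * A) * A := by rw [key]
        _ = (A * A) * (A * A) := by simp only [Matrix.mul_assoc]
    simpa [pow_two] using this
  have hABA : (A * B * A).PosSemidef := by
    have := hB.posSemidef.mul_mul_conjTranspose_same A
    rwa [hAH] at this
  have hAA : (A * A).PosSemidef := by
    have := Matrix.posSemidef_conjTranspose_mul_self A
    rwa [hAH] at this
  have heq : A * B * A = A * A := open scoped MatrixOrder in
    (CFC.sq_eq_sq_iff _ _ hABA.nonneg hAA.nonneg).mp hsq
  -- cancel A on both sides
  have h2 : A * B = A := by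
    have := congrArg (fun M => M * A⁻¹) heq
    simpa only [Matrix.mul_assoc, hAinv, Matrix.mul_one] using this
  have h3 := congrArg (fun M => A⁻¹ * M) h2
  simpa only [← Matrix.mul_assoc, hAinv', Matrix.one_mul, hAinv'] using h3
end

section
/- For every pair of positive definite n-by-n matrices B and P, there exists a positive definite A with A*B*A*B*A = P. -/
open scoped ComplexOrder Matrix
open Matrix

private lemma conj_posDef {n : ℕ} {A B : Matrix (Fin n) (Fin n) ℂ} (hA : A.PosDef)
    (hB : IsUnit B) : (Bᴴ * A * B).PosDef := by
  exact hA.conjTranspose_mul_mul_same (Matrix.mulVec_injective_iff_isUnit.mpr hB)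

private lemma isUnit_conjT {n : ℕ} {B : Matrix (Fin n) (Fin n) ℂ} (hB : IsUnit B) : IsUnit Bᴴ := by
  rw [Matrix.isUnit_iff_isUnit_det] at hB ⊢
  simpa [Matrix.det_conjTranspose] using hB.star

private lemma conj_posDef' {n : ℕ} {A B : Matrix (Fin n) (Fin n) ℂ} (hA : A.PosDef)
    (hB : IsUnit B) : (B * A * Bᴴ).PosDef := by
  simpa using conj_posDef hA (isUnit_conjT hB)

private lemma cube_root {n : ℕ} {M : Matrix (Fin n) (Fin n) ℂ} (hM : M.PosDef) :
    ∃ C : Matrix (Fin n) (Fin n) ℂ, C.PosDef ∧ C * C * C = M := by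
  set V : Matrix (Fin n) (Fin n) ℂ := (hM.1.eigenvectorUnitary : Matrix (Fin n) (Fin n) ℂ) with hV
  set D : Matrix (Fin n) (Fin n) ℂ :=
    diagonal ((↑) ∘ (fun x : ℝ => x ^ ((1 : ℝ)/3)) ∘ hM.1.eigenvalues) with hD
  have hVunit : IsUnit V := (Unitary.toUnits hM.1.eigenvectorUnitary).isUnit
  have hVV : Vᴴ * V = 1 := by
    simpa [Matrix.star_eq_conjTranspose] using
      (Matrix.mem_unitaryGroup_iff'.mp hM.1.eigenvectorUnitary.2)
  have hDpos : D.PosDef := by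
    refine Matrix.posDef_diagonal_iff.mpr fun i => ?_
    have h1 : (0 : ℝ) < hM.1.eigenvalues i ^ ((1 : ℝ)/3) :=
      Real.rpow_pos_of_pos (hM.eigenvalues_pos i) _
    simpa [Function.comp] using Complex.zero_lt_real.mpr h1
  refine ⟨V * D * Vᴴ, conj_posDef' hDpos hVunit, ?_⟩
  have hDDD : D * D * D = diagonal ((↑) ∘ hM.1.eigenvalues) := by
    rw [hD, diagonal_mul_diagonal, diagonal_mul_diagonal]
    refine congrArg diagonal (funext fun i => ?_)
    have h0 : (0 : ℝ) < hM.1.eigenvalues i := hM.eigenvalues_pos i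
    have : hM.1.eigenvalues i ^ ((1:ℝ)/3) * hM.1.eigenvalues i ^ ((1:ℝ)/3) *
        hM.1.eigenvalues i ^ ((1:ℝ)/3) = hM.1.eigenvalues i := by
      rw [← Real.rpow_add h0, ← Real.rpow_add h0]
      norm_num
    simp only [Function.comp_apply, Pi.mul_apply]
    rw [← Complex.ofReal_mul, ← Complex.ofReal_mul, this]
  have cancelV : ∀ X : Matrix (Fin n) (Fin n) ℂ, Vᴴ * (V * X) = X := fun X => by
    rw [← Matrix.mul_assoc, hVV, Matrix.one_mul]
  simp only [Matrix.mul_assoc, cancelV]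
  rw [show D * (D * (D * Vᴴ)) = D * D * D * Vᴴ by simp [Matrix.mul_assoc], hDDD,
    ← Matrix.mul_assoc]
  exact (hM.1.spectral_theorem).symm

private noncomputable def psqrt {n : ℕ} {B : Matrix (Fin n) (Fin n) ℂ} (hA : B.PosSemidef) :
    Matrix (Fin n) (Fin n) ℂ :=
  (hA.1.eigenvectorUnitary : Matrix (Fin n) (Fin n) ℂ) *
    diagonal ((↑) ∘ Real.sqrt ∘ hA.1.eigenvalues) *
    (star hA.1.eigenvectorUnitary : Matrix (Fin n) (Fin n) ℂ)

private lemma psqrt_mul_self {n : ℕ} {B : Matrix (Fin n) (Fin n) ℂ} (hA : B.PosSemidef) :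
    psqrt hA * psqrt hA = B := by
  have hVV : (star hA.1.eigenvectorUnitary : Matrix (Fin n) (Fin n) ℂ) *
      (hA.1.eigenvectorUnitary : Matrix (Fin n) (Fin n) ℂ) = 1 :=
    Unitary.coe_star_mul_self _
  have hDD : (diagonal ((↑) ∘ Real.sqrt ∘ hA.1.eigenvalues) : Matrix (Fin n) (Fin n) ℂ) *
      diagonal ((↑) ∘ Real.sqrt ∘ hA.1.eigenvalues) = diagonal ((↑) ∘ hA.1.eigenvalues) := by
    rw [diagonal_mul_diagonal]
    refine congrArg diagonal (funext fun i => ?_)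
    simp only [Function.comp_apply]
    rw [← Complex.ofReal_mul, Real.mul_self_sqrt (hA.eigenvalues_nonneg i)]
  rw [psqrt, show ∀ a b c d e f : Matrix (Fin n) (Fin n) ℂ,
    a * b * c * (d * e * f) = a * (b * (c * d) * e) * f from fun _ _ _ _ _ _ => by
      simp [Matrix.mul_assoc], hVV, Matrix.mul_one, hDD]
  exact hA.1.spectral_theorem.symm

private lemma posDef_sqrt {n : ℕ} {B : Matrix (Fin n) (Fin n) ℂ} (hB : B.PosDef) :
    (psqrt hB.posSemidef).PosDef := by
  rw [psqrt]
  have hVunit : IsUnit (hB.posSemidef.1.eigenvectorUnitary.1) :=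
    (Unitary.toUnits hB.posSemidef.1.eigenvectorUnitary).isUnit
  have hDpos : (diagonal ((↑) ∘ Real.sqrt ∘ hB.posSemidef.1.eigenvalues) :
      Matrix (Fin n) (Fin n) ℂ).PosDef := by
    refine Matrix.posDef_diagonal_iff.mpr fun i => ?_
    have h1 : (0 : ℝ) < Real.sqrt (hB.posSemidef.1.eigenvalues i) :=
      Real.sqrt_pos.mpr (hB.eigenvalues_pos i)
    simpa [Function.comp] using Complex.zero_lt_real.mpr h1
  have : (star hB.posSemidef.1.eigenvectorUnitary : Matrix (Fin n) (Fin n) ℂ) =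
      (hB.posSemidef.1.eigenvectorUnitary : Matrix (Fin n) (Fin n) ℂ)ᴴ := rfl
  rw [this]
  exact conj_posDef' hDpos hVunit

/-- The symmetric word equation `A*B*A*B*A = P` is solvable in positive definite `A`. -/
theorem stmt_16 {n : ℕ} (B P : Matrix (Fin n) (Fin n) ℂ)
    (hB : B.PosDef) (hP : P.PosDef) :
    ∃ A : Matrix (Fin n) (Fin n) ℂ, A.PosDef ∧ A * B * A * B * A = P := by
  set S := psqrt hB.posSemidef with hS
  have hSpos : S.PosDef := posDef_sqrt hB
  have hSS : S * S = B := psqrt_mul_self hB.posSemidef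
  have hSherm : Sᴴ = S := hSpos.1
  have hSu : IsUnit S := hSpos.isUnit
  have hM : (S * P * S).PosDef := by
    have := conj_posDef' hP hSu
    rwa [hSherm] at this
  obtain ⟨C, hC, hCCC⟩ := cube_root hM
  have hSi : S⁻¹.PosDef := hSpos.inv
  have hSiherm : S⁻¹ᴴ = S⁻¹ := hSi.1
  refine ⟨S⁻¹ * C * S⁻¹, ?_, ?_⟩
  · have := conj_posDef' hC hSi.isUnit
    rwa [hSiherm] at this
  · have hinv : S⁻¹ * S = 1 := Matrix.nonsing_inv_mul S (Matrix.isUnit_iff_isUnit_det _ |>.mp hSu)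
    have hinv' : S * S⁻¹ = 1 := Matrix.mul_nonsing_inv S (Matrix.isUnit_iff_isUnit_det _ |>.mp hSu)
    have cancel1 : ∀ X : Matrix (Fin n) (Fin n) ℂ, S⁻¹ * (S * X) = X := fun X => by
      rw [← Matrix.mul_assoc, hinv, Matrix.one_mul]
    have cancel2 : ∀ X : Matrix (Fin n) (Fin n) ℂ, S * (S⁻¹ * X) = X := fun X => by
      rw [← Matrix.mul_assoc, hinv', Matrix.one_mul]
    rw [← hSS]
    simp only [Matrix.mul_assoc, cancel1, cancel2]
    rw [show C * (C * (C * S⁻¹)) = C * C * C * S⁻¹ by simp [Matrix.mul_assoc], hCCC]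
    simp only [Matrix.mul_assoc, cancel1, cancel2, hinv', Matrix.mul_one]
end

section
/- For an n-by-n complex matrix C, the following are equivalent: (i) 0 is not in the field of values F(C) = { x* C x : x ∈ C^n, x* x = 1 }; (ii) every leading principal minor of U* C^{-1} U is nonzero for every unitary U (in particular C is invertible and all principal submatrices of every unitary conjugate of C^{-1} are invertible). -/
open scoped ComplexOrder Matrix

open Matrix Complex

private lemma star_dot_self' {n : ℕ} (x : Fin n → ℂ) :
    star x ⬝ᵥ x = ((∑ i, Complex.normSq (x i) : ℝ) : ℂ) := by
  simp only [dotProduct, Pi.star_apply, Complex.ofReal_sum]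
  refine Finset.sum_congr rfl fun i _ => ?_
  rw [Complex.normSq_eq_conj_mul_self]
  rfl

/-- normalize a nonzero vector annihilating the quadratic form. -/
private lemma exists_unit' {n : ℕ} (A : Matrix (Fin n) (Fin n) ℂ) (x : Fin n → ℂ) (hx : x ≠ 0)
    (hq : star x ⬝ᵥ A.mulVec x = 0) :
    ∃ y : Fin n → ℂ, star y ⬝ᵥ y = 1 ∧ star y ⬝ᵥ A.mulVec y = 0 := by
  set s : ℝ := ∑ i, Complex.normSq (x i) with hs
  have hspos : 0 < s := by
    obtain ⟨i, hi⟩ := Function.ne_iff.mp hx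
    refine Finset.sum_pos' (fun j _ => Complex.normSq_nonneg _) ⟨i, Finset.mem_univ i, ?_⟩
    simpa [Complex.normSq_pos] using hi
  set c : ℂ := (((Real.sqrt s)⁻¹ : ℝ) : ℂ) with hc
  have hcc : (starRingEnd ℂ) c = c := Complex.conj_ofReal _
  have key : ∀ v : Fin n → ℂ, star (c • x) ⬝ᵥ v = c * (star x ⬝ᵥ v) := by
    intro v
    rw [star_smul, smul_dotProduct]
    simp [hcc]
  have hr : (Real.sqrt s)⁻¹ * ((Real.sqrt s)⁻¹ * s) = 1 := by
    have h2 : Real.sqrt s * Real.sqrt s = s := Real.mul_self_sqrt hspos.le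
    have h3 : Real.sqrt s ≠ 0 := by positivity
    field_simp
    rw [Real.sq_sqrt hspos.le]
  refine ⟨c • x, ?_, ?_⟩
  · rw [key, dotProduct_smul, star_dot_self', smul_eq_mul, hc,
      ← Complex.ofReal_mul, ← Complex.ofReal_mul, hr, Complex.ofReal_one]
  · rw [Matrix.mulVec_smul, key, dotProduct_smul, hq]
    simp

private lemma sum_pad' {n k : ℕ} (h : k ≤ n) (f : Fin n → ℂ)
    (hf : ∀ i : Fin n, ¬ (i : ℕ) < k → f i = 0) :
    ∑ i, f i = ∑ i : Fin k, f (Fin.castLE h i) := by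
  have hm := Finset.sum_map Finset.univ (Fin.castLEEmb h) f
  simp only [Fin.castLEEmb_apply] at hm
  rw [← hm]
  refine (Finset.sum_subset (Finset.subset_univ _) fun i _ hi => hf i fun hik => hi ?_).symm
  simp only [Finset.mem_map, Finset.mem_univ, Fin.castLEEmb_apply, true_and]
  exact ⟨⟨i, hik⟩, Fin.ext rfl⟩

/-- zero-padding of a vector. -/
private def pad' {n k : ℕ} (h : k ≤ n) (v : Fin k → ℂ) : Fin n → ℂ :=
  fun i => if hi : (i : ℕ) < k then v ⟨i, hi⟩ else 0

private lemma pad_castLE {n k : ℕ} (h : k ≤ n) (v : Fin k → ℂ) (i : Fin k) :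
    pad' h v (Fin.castLE h i) = v i := by
  simp [pad', i.isLt]

private lemma pad_quad' {n k : ℕ} (h : k ≤ n) (A : Matrix (Fin n) (Fin n) ℂ) (v : Fin k → ℂ) :
    star (pad' h v) ⬝ᵥ A.mulVec (pad' h v) =
      star v ⬝ᵥ (A.submatrix (Fin.castLE h) (Fin.castLE h)).mulVec v := by
  unfold dotProduct Matrix.mulVec
  rw [sum_pad' h _ (fun i hi => by simp [pad', hi])]
  refine Finset.sum_congr rfl fun i _ => ?_
  simp only [Pi.star_apply, pad_castLE]
  congr 1
  unfold dotProduct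
  rw [sum_pad' h _ (fun j hj => by simp [pad', hj])]
  refine Finset.sum_congr rfl fun j _ => ?_
  rw [pad_castLE]
  rfl

private lemma conj_quad' {n : ℕ} (U A : Matrix (Fin n) (Fin n) ℂ) (x : Fin n → ℂ) :
    star x ⬝ᵥ (Uᴴ * A * U).mulVec x = star (U.mulVec x) ⬝ᵥ A.mulVec (U.mulVec x) := by
  rw [← Matrix.mulVec_mulVec, ← Matrix.mulVec_mulVec, Matrix.dotProduct_mulVec,
    ← Matrix.star_mulVec]

/-- `0` is not in the field of values of `C` iff every leading principal minor of every
unitary conjugate of `C⁻¹` is nonzero. -/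
theorem stmt_19 {n : ℕ} (C : Matrix (Fin n) (Fin n) ℂ) :
    (∀ x : Fin n → ℂ, star x ⬝ᵥ x = 1 → star x ⬝ᵥ C.mulVec x ≠ 0) ↔
      (∀ U ∈ Matrix.unitaryGroup (Fin n) ℂ, ∀ k : ℕ, ∀ h : k ≤ n,
        ((Uᴴ * C⁻¹ * U).submatrix (Fin.castLE h) (Fin.castLE h)).det ≠ 0) := by
  constructor
  · intro hC U hU k hk
    -- `C` is invertible
    have hCdet : IsUnit C.det := by
      rw [isUnit_iff_ne_zero]
      intro hd
      obtain ⟨v, hv0, hCv⟩ := (Matrix.exists_mulVec_eq_zero_iff).mpr hd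
      obtain ⟨y, hy1, hy0⟩ := exists_unit' C v hv0 (by rw [hCv]; simp)
      exact hC y hy1 hy0
    -- 0 is not attained by the quadratic form of `C⁻¹` on nonzero vectors
    have hFinv : ∀ y : Fin n → ℂ, y ≠ 0 → star y ⬝ᵥ C⁻¹.mulVec y ≠ 0 := by
      intro y hy hq
      set x : Fin n → ℂ := C⁻¹.mulVec y with hxdef
      have hCx : C.mulVec x = y := by
        rw [hxdef, Matrix.mulVec_mulVec, Matrix.mul_nonsing_inv _ hCdet, Matrix.one_mulVec]
      have hx0 : x ≠ 0 := fun h => hy (by rw [← hCx, h, Matrix.mulVec_zero])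
      have hq2 : star x ⬝ᵥ C.mulVec x = 0 := by
        rw [hCx, Matrix.star_dotProduct, hq, star_zero]
      obtain ⟨z, hz1, hz0⟩ := exists_unit' C x hx0 hq2
      exact hC z hz1 hz0
    -- now the minors
    intro hdet
    obtain ⟨v, hv0, hBv⟩ := (Matrix.exists_mulVec_eq_zero_iff).mpr hdet
    set w : Fin n → ℂ := pad' hk v with hwdef
    have hw0 : w ≠ 0 := by
      intro hw
      obtain ⟨i, hi⟩ := Function.ne_iff.mp hv0
      apply hi
      have := congrFun hw (Fin.castLE hk i)
      rwa [hwdef, pad_castLE] at this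
    have hwq : star w ⬝ᵥ (Uᴴ * C⁻¹ * U).mulVec w = 0 := by
      rw [hwdef, pad_quad', hBv, dotProduct_zero]
    rw [conj_quad'] at hwq
    have hUw : U.mulVec w ≠ 0 := by
      intro hU0
      apply hw0
      have h1 : star U * U = 1 := (Matrix.mem_unitaryGroup_iff').mp hU
      calc w = (star U * U).mulVec w := by rw [h1, Matrix.one_mulVec]
        _ = (star U).mulVec (U.mulVec w) := by rw [Matrix.mulVec_mulVec]
        _ = 0 := by rw [hU0, Matrix.mulVec_zero]
    exact hFinv _ hUw hwq
  · intro hR x hx1 hq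
    rcases Nat.eq_zero_or_pos n with hn | hn
    · subst hn
      rw [show star x ⬝ᵥ x = 0 from Finset.sum_empty] at hx1
      exact one_ne_zero hx1.symm
    -- `C` is invertible
    have hid : (Fin.castLE (le_refl n)) = (id : Fin n → Fin n) := funext fun i => Fin.ext rfl
    have hdetinv := hR 1 (one_mem _) n (le_refl n)
    rw [hid, Matrix.submatrix_id_id, Matrix.conjTranspose_one, one_mul, mul_one] at hdetinv
    have hCdet : IsUnit C.det := by
      rw [isUnit_iff_ne_zero]
      intro hd
      apply hdetinv
      rw [Matrix.det_nonsing_inv, hd, Ring.inverse_zero]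
    -- pass to `C⁻¹`
    set y : Fin n → ℂ := C.mulVec x with hydef
    have hy0 : y ≠ 0 := by
      intro hy
      have hx0 : x = 0 := by
        calc x = (C⁻¹ * C).mulVec x := by
              rw [Matrix.nonsing_inv_mul _ hCdet, Matrix.one_mulVec]
          _ = C⁻¹.mulVec y := by rw [← Matrix.mulVec_mulVec, hydef]
          _ = 0 := by rw [hy, Matrix.mulVec_zero]
      rw [hx0] at hx1
      simp at hx1
    have hyq : star y ⬝ᵥ C⁻¹.mulVec y = 0 := by
      have hCy : C⁻¹.mulVec y = x := by
        rw [hydef, Matrix.mulVec_mulVec, Matrix.nonsing_inv_mul _ hCdet, Matrix.one_mulVec]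
      rw [hCy, Matrix.star_dotProduct, hq, star_zero]
    obtain ⟨z, hz1, hz0⟩ := exists_unit' C⁻¹ y hy0 hyq
    -- build a unitary with first column `z`
    set z' : EuclideanSpace ℂ (Fin n) := WithLp.toLp 2 z with hz'def
    have hz'norm : ‖z'‖ = 1 := by
      have hs1 : (∑ i, Complex.normSq (z i)) = 1 := by
        have h := hz1
        rw [star_dot_self', Complex.ofReal_eq_one] at h
        exact h
      rw [EuclideanSpace.norm_eq]
      have h2 : ∑ i, ‖z' i‖ ^ 2 = 1 := by
        rw [← hs1]
        exact Finset.sum_congr rfl fun i _ => by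
          simp [Complex.sq_norm, hz'def]
      rw [h2, Real.sqrt_one]
    set i0 : Fin n := ⟨0, hn⟩ with hi0
    have hfr : Module.finrank ℂ (EuclideanSpace ℂ (Fin n)) = Fintype.card (Fin n) := by
      simp
    have horth : Orthonormal ℂ (({i0} : Set (Fin n)).restrict (fun _ => z')) := by
      constructor
      · intro i; exact hz'norm
      · intro i j hij
        exact absurd (Subsingleton.elim i j) hij
    obtain ⟨b, hb⟩ := horth.exists_orthonormalBasis_extension_of_card_eq hfr
    have hbz : b i0 = z' := hb i0 rfl
    set U : Matrix (Fin n) (Fin n) ℂ := fun i j => b j i with hUdef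
    have hU : U ∈ Matrix.unitaryGroup (Fin n) ℂ := by
      rw [Matrix.mem_unitaryGroup_iff']
      ext a c
      have : (star U * U) a c = (inner ℂ (b a) (b c) : ℂ) := by
        rw [Matrix.mul_apply, PiLp.inner_apply]
        refine Finset.sum_congr rfl fun i _ => ?_
        rw [Matrix.star_apply]
        simp [hUdef, RCLike.inner_apply, mul_comm]
      rw [this, orthonormal_iff_ite.mp b.orthonormal a c, Matrix.one_apply]
    have hcol : U.mulVec (Pi.single i0 1) = z := by
      funext i
      rw [Matrix.mulVec_single]
      rw [Pi.smul_apply, Matrix.col_apply, MulOpposite.op_one, one_smul]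
      exact (congrFun (congrArg WithLp.ofLp hbz) i).trans (by rw [hz'def])
    have hmin := hR U hU 1 hn
    apply hmin
    rw [Matrix.det_fin_one]
    have hcast : (Fin.castLE hn (0 : Fin 1)) = i0 := Fin.ext rfl
    rw [Matrix.submatrix_apply, hcast]
    have hentry : (Uᴴ * C⁻¹ * U) i0 i0
        = star (Pi.single i0 1 : Fin n → ℂ) ⬝ᵥ (Uᴴ * C⁻¹ * U).mulVec (Pi.single i0 1 : Fin n → ℂ) := by
      rw [Matrix.mulVec_single]
      have hs : star (Pi.single i0 (1 : ℂ)) = (Pi.single i0 1 : Fin n → ℂ) := by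
        funext i
        rcases eq_or_ne i i0 with h | h
        · subst h; simp
        · simp [Pi.single_eq_of_ne h]
      rw [hs]
      simp [dotProduct, Pi.single_apply, Finset.sum_ite_eq']
    rw [hentry, conj_quad', hcol, hz0]
end
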